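/- Let n ≥ 1 and m ≥ 1 be natural numbers and let a, b be complex-valued functions on the set of pair partitions of Fin (2*n). Then the following exact identity holds: (m : ℂ)^(-n) · ∑_{k : Fin (2*n) → Fin m} (∑_{σ a pair partition respected by k} a(σ)) · (∑_{σ' a pair partition respected by k} b(σ')) = ∑_{σ, σ' pair partitions} a(σ) · b(σ') · (m : ℂ)^(e(σ,σ')), where e(σ,σ') is the integer (number of parts of σ ⊔ σ') − n. -/

import Mathlib

open Finset

/-- The setoid on `Fin N` induced by a finpartition of `univ : Finset (Fin N)`:
two elements are related iff they lie in a common part. -/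
def Finpartition.toSetoidFin {N : ℕ} (σ : Finpartition (univ : Finset (Fin N))) :
    Setoid (Fin N) where
  r a b := ∃ s ∈ σ.parts, a ∈ s ∧ b ∈ s
  iseqv :=
    { refl := fun a => by
        obtain ⟨s, hs, ha⟩ := σ.exists_mem (mem_univ a)
        exact ⟨s, hs, ha, ha⟩
      symm := fun h => by
        obtain ⟨s, hs, ha, hb⟩ := h
        exact ⟨s, hs, hb, ha⟩
      trans := fun h h' => by
        obtain ⟨s, hs, ha, hb⟩ := h
        obtain ⟨t, ht, hb', hc⟩ := h'
        obtain rfl := σ.eq_of_mem_parts hs ht hb hb'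
        exact ⟨s, hs, ha, hc⟩ }

/-- The join `σ ⊔ τ` of two finpartitions of `univ : Finset (Fin N)` in the lattice of
finpartitions under the refinement order: its parts are the equivalence classes of the
join of the associated setoids. -/
noncomputable def Finpartition.finJoin {N : ℕ}
    (σ τ : Finpartition (univ : Finset (Fin N))) :
    Finpartition (univ : Finset (Fin N)) :=
  letI : DecidableRel (σ.toSetoidFin ⊔ τ.toSetoidFin).r := Classical.decRel _
  Finpartition.ofSetoid (σ.toSetoidFin ⊔ τ.toSetoidFin)

/-- A pair partition: a finpartition all of whose parts have exactly two elements. -/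
def IsPairPartition {N : ℕ} (σ : Finpartition (univ : Finset (Fin N))) : Prop :=
  ∀ s ∈ σ.parts, s.card = 2

instance {N : ℕ} : DecidablePred (IsPairPartition (N := N)) := fun σ =>
  decidable_of_iff (∀ s ∈ σ.parts, s.card = 2) Iff.rfl

/-- `k : Fin d → Fin m` respects a finpartition `σ` if it is constant on every part. -/
def Respects {d m : ℕ} (k : Fin d → Fin m)
    (σ : Finpartition (univ : Finset (Fin d))) : Prop :=
  ∀ s ∈ σ.parts, ∀ a ∈ s, ∀ b ∈ s, k a = k b

instance {d m : ℕ} (k : Fin d → Fin m) : DecidablePred (Respects k) := fun σ =>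
  decidable_of_iff (∀ s ∈ σ.parts, ∀ a ∈ s, ∀ b ∈ s, k a = k b) Iff.rfl

/-- The number of crossings of a pair partition: the number of (ordered, hence each counted
once) pairs of parts `{a,b}`, `{c,d}` with `a < c < b < d`. -/
def crossings {N : ℕ} (σ : Finpartition (univ : Finset (Fin N))) : ℕ :=
  ((σ.parts ×ˢ σ.parts).filter fun st =>
    ∃ a ∈ st.1, ∃ b ∈ st.1, ∃ c ∈ st.2, ∃ d ∈ st.2, a < c ∧ c < b ∧ b < d).card

/-- The product `∏ c r t` over the parts `{r, t}` (with `r < t`) of a pair partition. -/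
def pairProd {N : ℕ} (σ : Finpartition (univ : Finset (Fin N)))
    (c : Fin N → Fin N → ℂ) : ℂ :=
  ∏ s ∈ σ.parts, if h : s.Nonempty then c (s.min' h) (s.max' h) else 1

/-- exact moment identity. For `n, m ≥ 1` and complex coefficients `a, b` on
pair partitions of `Fin (2*n)`,
`m^(-n) ∑_k (∑_{σ respected by k} a σ) (∑_{σ' respected by k} b σ')
  = ∑_{σ,σ'} a σ * b σ' * m^(|σ ⊔ σ'| - n)`. -/
lemma respects_iff_le_ker {d m : ℕ} (k : Fin d → Fin m)
    (σ : Finpartition (univ : Finset (Fin d))) :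
    Respects k σ ↔ σ.toSetoidFin ≤ Setoid.ker k := by
  constructor
  · intro h x y hxy
    obtain ⟨s, hs, hx, hy⟩ := hxy
    exact h s hs x hx y hy
  · intro h s hs x hx y hy
    exact h ⟨s, hs, hx, hy⟩

lemma respects_ofSetoid_iff {d m : ℕ} (k : Fin d → Fin m)
    (s : Setoid (Fin d)) [DecidableRel s.r] :
    Respects k (Finpartition.ofSetoid s) ↔ s ≤ Setoid.ker k := by
  constructor
  · intro h x y hxy
    exact h _ ((Finpartition.ofSetoid s).part_mem.2 (mem_univ x)) x
      ((Finpartition.ofSetoid s).mem_part (mem_univ x)) y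
      (Finpartition.mem_part_ofSetoid_iff_rel.2 hxy)
  · intro h t ht x hx y hy
    have hx' : t = (Finpartition.ofSetoid s).part x :=
      ((Finpartition.ofSetoid s).part_eq_of_mem ht hx).symm
    subst hx'
    exact h (Finpartition.mem_part_ofSetoid_iff_rel.1 hy)

lemma respects_finJoin_iff {d m : ℕ} (k : Fin d → Fin m)
    (σ τ : Finpartition (univ : Finset (Fin d))) :
    Respects k (σ.finJoin τ) ↔ Respects k σ ∧ Respects k τ := by
  unfold Finpartition.finJoin
  rw [respects_ofSetoid_iff, sup_le_iff, ← respects_iff_le_ker, ← respects_iff_le_ker]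

-- counting lemma
lemma card_respects {d m : ℕ} (P : Finpartition (univ : Finset (Fin d))) :
    (univ.filter fun k : Fin d → Fin m => Respects k P).card = m ^ P.parts.card := by
  classical
  have e : {k : Fin d → Fin m // Respects k P} ≃ ({s // s ∈ P.parts} → Fin m) := by
    refine ⟨fun k s => k.1 ((s.1.min' (P.nonempty_of_mem_parts s.2))),
      fun f => ⟨fun x => f ⟨P.part x, P.part_mem.2 (mem_univ x)⟩, ?_⟩, ?_, ?_⟩
    · intro s hs x hx y hy
      have h1 : P.part x = s := P.part_eq_of_mem hs hx
      have h2 : P.part y = s := P.part_eq_of_mem hs hy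
      simp only [h1, h2]
    · intro k
      apply Subtype.ext
      funext x
      exact k.2 _ (P.part_mem.2 (mem_univ x)) _ (min'_mem _ _) x (P.mem_part (mem_univ x))
    · intro f
      funext s
      have : (⟨P.part (s.1.min' (P.nonempty_of_mem_parts s.2)),
          P.part_mem.2 (mem_univ _)⟩ : {s // s ∈ P.parts}) = s :=
        Subtype.ext (P.part_eq_of_mem s.2 (min'_mem _ _))
      simpa using congrArg f this
  have hsub : Fintype.card {k : Fin d → Fin m // Respects k P} = m ^ P.parts.card := by
    rw [Fintype.card_congr e, Fintype.card_fun, Fintype.card_coe, Fintype.card_fin]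
  rw [← hsub, Fintype.card_subtype]


theorem moment_sum_identity (n m : ℕ) (hn : 1 ≤ n) (hm : 1 ≤ m)
    (a b : Finpartition (univ : Finset (Fin (2 * n))) → ℂ) :
    (m : ℂ) ^ (-(n : ℤ)) *
      ∑ k : Fin (2 * n) → Fin m,
        (∑ σ ∈ univ.filter fun σ => IsPairPartition σ ∧ Respects k σ, a σ) *
        (∑ σ' ∈ univ.filter fun σ' => IsPairPartition σ' ∧ Respects k σ', b σ') =
    ∑ σ ∈ univ.filter fun σ => IsPairPartition σ,
      ∑ σ' ∈ univ.filter fun σ' => IsPairPartition σ',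
        a σ * b σ' * (m : ℂ) ^ (((σ.finJoin σ').parts.card : ℤ) - (n : ℤ)) := by
  classical
  have hm0 : (m : ℂ) ≠ 0 := Nat.cast_ne_zero.2 (by omega)
  have key : ∀ σ σ' : Finpartition (univ : Finset (Fin (2 * n))),
      (univ.filter fun k : Fin (2 * n) → Fin m => Respects k σ ∧ Respects k σ').card
        = m ^ (σ.finJoin σ').parts.card := by
    intro σ σ'
    rw [← card_respects]
    congr 1
    ext k
    simp [respects_finJoin_iff]
  have step1 : ∀ (c : Finpartition (univ : Finset (Fin (2 * n))) → ℂ)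
      (k : Fin (2 * n) → Fin m),
      (∑ σ ∈ univ.filter fun σ => IsPairPartition σ ∧ Respects k σ, c σ)
        = ∑ σ ∈ univ.filter fun σ => IsPairPartition σ,
            if Respects k σ then c σ else 0 := by
    intro c k
    rw [Finset.sum_filter, Finset.sum_filter]
    refine sum_congr rfl fun σ _ => ?_
    by_cases h1 : IsPairPartition σ <;> by_cases h2 : Respects k σ <;> simp [h1, h2]
  have expand : (∑ k : Fin (2 * n) → Fin m,
      (∑ σ ∈ univ.filter fun σ => IsPairPartition σ ∧ Respects k σ, a σ) *
      (∑ σ' ∈ univ.filter fun σ' => IsPairPartition σ' ∧ Respects k σ', b σ'))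
      = ∑ σ ∈ univ.filter fun σ => IsPairPartition σ,
          ∑ σ' ∈ univ.filter fun σ' => IsPairPartition σ',
            a σ * b σ' * (m : ℂ) ^ ((σ.finJoin σ').parts.card) := by
    simp only [step1, Finset.sum_mul_sum]
    rw [Finset.sum_comm]
    refine sum_congr rfl fun σ _ => ?_
    rw [Finset.sum_comm]
    refine sum_congr rfl fun σ' _ => ?_
    have : ∀ k : Fin (2 * n) → Fin m,
        (if Respects k σ then a σ else 0) * (if Respects k σ' then b σ' else 0)
          = if Respects k σ ∧ Respects k σ' then a σ * b σ' else 0 := by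
      intro k
      by_cases h1 : Respects k σ <;> by_cases h2 : Respects k σ' <;> simp [h1, h2]
    simp only [this]
    rw [← Finset.sum_filter, Finset.sum_const, key σ σ', nsmul_eq_mul]
    push_cast
    ring
  rw [expand, Finset.mul_sum]
  refine sum_congr rfl fun σ _ => ?_
  rw [Finset.mul_sum]
  refine sum_congr rfl fun σ' _ => ?_
  rw [zpow_sub₀ hm0, zpow_natCast]
  field_simp
  rw [zpow_neg, zpow_natCast, mul_comm _ ((m : ℂ) ^ n), ← mul_assoc, ← mul_assoc,
    mul_inv_cancel₀ (pow_ne_zero _ hm0), one_mul]
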